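/- If G is a 2r-regular edge graceful (p, q) graph with gcd(r, k·p) = 1 and k is odd, then the disjoint union kG of k disjoint copies of G is edge graceful. -/

import Mathlib

/-- A finite multigraph (no loops): each edge has an unordered pair of distinct ends. -/
structure Multigraph (V E : Type) [Fintype V] [DecidableEq V] [Fintype E] where
  ends : E → Sym2 V
  loopless : ∀ e, ¬ (ends e).IsDiag

variable {V E : Type} [Fintype V] [DecidableEq V] [Fintype E]

/-- The edges incident with a vertex. -/
def Multigraph.incident (G : Multigraph V E) (v : V) : Finset E :=
  Finset.univ.filter (fun e => v ∈ G.ends e)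

/-- The degree of a vertex (no loops, so each incident edge counts once). -/
def Multigraph.degree (G : Multigraph V E) (v : V) : ℕ := (G.incident v).card

/-- Edge gracefulness: the edges can be labeled bijectively by `1, …, q` so that the
vertex labels induced by summing labels of incident edges modulo `p` are distinct. -/
def Multigraph.EdgeGraceful (G : Multigraph V E) : Prop :=
  ∃ ℓ : E ≃ Fin (Fintype.card E),
    Function.Injective (fun v : V =>
      ∑ e ∈ G.incident v, (((ℓ e).val + 1 : ℕ) : ZMod (Fintype.card V)))

/-- The disjoint union of `k` copies of `G`. -/
def Multigraph.copies (G : Multigraph V E) (k : ℕ) : Multigraph (V × Fin k) (E × Fin k) where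
  ends e := (G.ends e.1).map (fun v => (v, e.2))
  loopless e h := G.loopless e.1 (by
    have : Function.Injective (fun v : V => (v, e.2)) := fun a b hab => congrArg Prod.fst hab
    rwa [Sym2.isDiag_map this] at h)


lemma sym2_filter_card {V : Type} [Fintype V] [DecidableEq V] (s : Sym2 V) (h : ¬ s.IsDiag) :
    (Finset.univ.filter (fun v => v ∈ s)).card = 2 := by
  induction s using Sym2.ind with
  | _ a b =>
    have hab : a ≠ b := by simpa using h
    have he : Finset.univ.filter (fun v => v ∈ s(a, b)) = {a, b} := by
      ext v; simp [Sym2.mem_iff]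
    rw [he, Finset.card_insert_of_notMem (by simp [hab]), Finset.card_singleton]

lemma handshake (G : Multigraph V E) : ∑ v, G.degree v = 2 * Fintype.card E := by
  unfold Multigraph.degree Multigraph.incident
  simp_rw [Finset.card_filter]
  rw [Finset.sum_comm]
  have : ∀ e : E, (∑ v : V, if v ∈ G.ends e then 1 else 0) = 2 := by
    intro e
    rw [← Finset.card_filter]
    exact sym2_filter_card _ (G.loopless e)
  simp only [this, Finset.sum_const, Finset.card_univ, smul_eq_mul, mul_comm]

lemma copies_incident {p q : ℕ} (G : Multigraph (Fin p) (Fin q)) (k : ℕ) (v : Fin p) (j : Fin k) :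
    (G.copies k).incident (v, j) =
      (G.incident v).map ⟨fun e => (e, j), fun a b h => congrArg Prod.fst h⟩ := by
  ext ⟨e, i⟩
  simp only [Multigraph.incident, Multigraph.copies, Finset.mem_filter, Finset.mem_univ,
    true_and, Finset.mem_map, Function.Embedding.coeFn_mk, Sym2.mem_map, Prod.mk.injEq]
  constructor
  · rintro ⟨a, ha, rfl, rfl⟩
    exact ⟨e, ha, rfl⟩
  · rintro ⟨a, ha, rfl, rfl⟩
    exact ⟨v, ha, rfl, rfl⟩

/-- Theorem 2: if `G` is a `2r`-regular edge graceful `(p,q)` graph with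
`gcd(r, kp) = 1` and `k` odd, then `kG` is edge graceful. -/
theorem stmt_8 (p q r k : ℕ) (hr : 0 < r) (hk : 0 < k)
    (G : Multigraph (Fin p) (Fin q))
    (hreg : ∀ v, G.degree v = 2 * r)
    (hEG : G.EdgeGraceful)
    (hgcd : Nat.gcd r (k * p) = 1) (hkodd : Odd k) :
    (G.copies k).EdgeGraceful := by
  rcases Nat.eq_zero_or_pos p with rfl | hp
  · exact ⟨Fintype.equivFin _, fun a b _ => a.1.elim0⟩
  obtain ⟨ℓ₀, hinj⟩ := hEG
  set ℓ : Fin q ≃ Fin q := ℓ₀.trans (finCongr (Fintype.card_fin q)) with hℓ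
  -- q = r * p by handshake
  have hq : q = r * p := by
    have h1 := handshake G
    rw [Finset.sum_congr rfl (fun v _ => hreg v), Finset.sum_const, Finset.card_univ,
      Fintype.card_fin, Fintype.card_fin, smul_eq_mul] at h1
    have h2 : 2 * q = 2 * (r * p) := by rw [← h1]; ring
    exact Nat.eq_of_mul_eq_mul_left (by norm_num) h2
  -- natural-number vertex sums
  set S : Fin p → ℕ := fun v => ∑ e ∈ G.incident v, ((ℓ e).val + 1) with hS
  have hinj' : ∀ v v' : Fin p, S v ≡ S v' [MOD p] → v = v' := by
    intro v v' hvv'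
    apply hinj
    have h3 : ((S v : ℕ) : ZMod (Fintype.card (Fin p))) = ((S v' : ℕ) : ZMod (Fintype.card (Fin p))) := by
      rw [ZMod.natCast_eq_natCast_iff]
      simpa [Fintype.card_fin] using hvv'
    simp only [hS] at h3
    push_cast at h3
    simpa [hℓ] using h3
  -- the labeling of the copies
  have hcq : k * q = Fintype.card (Fin q × Fin k) := by simp [Nat.mul_comm]
  set L : (Fin q × Fin k) ≃ Fin (Fintype.card (Fin q × Fin k)) :=
    ((Equiv.prodComm (Fin q) (Fin k)).trans
      ((Equiv.prodCongr (Equiv.refl (Fin k)) ℓ).trans finProdFinEquiv)).trans (finCongr hcq)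
    with hL
  refine ⟨L, ?_⟩
  have hLval : ∀ (e : Fin q) (j : Fin k),
      (L (e, j)).val = (ℓ e).val + q * j.val := by
    intro e j
    simp [hL, finProdFinEquiv]
  have key : ∀ (v : Fin p) (j : Fin k),
      (∑ e' ∈ (G.copies k).incident (v, j),
        (((L e').val + 1 : ℕ) : ZMod (Fintype.card (Fin p × Fin k))))
      = ((S v + (2 * r) * (q * j.val) : ℕ) : ZMod (Fintype.card (Fin p × Fin k))) := by
    intro v j
    have hn : ∑ e ∈ G.incident v, ((L (e, j)).val + 1) = S v + 2 * r * (q * j.val) := by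
      simp only [hLval]
      have hre : ∀ e ∈ G.incident v,
          (ℓ e).val + q * j.val + 1 = ((ℓ e).val + 1) + q * j.val := fun _ _ => by ring
      rw [Finset.sum_congr rfl hre, Finset.sum_add_distrib, Finset.sum_const, smul_eq_mul]
      have hd := hreg v
      rw [Multigraph.degree] at hd
      rw [hd, hS]
    rw [copies_incident, Finset.sum_map]
    rw [← Nat.cast_sum]
    exact congrArg Nat.cast hn
  intro a b hab
  obtain ⟨v, j⟩ := a
  obtain ⟨v', j'⟩ := b
  simp only at hab
  rw [key v j, key v' j'] at hab
  rw [ZMod.natCast_eq_natCast_iff] at hab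
  have hcard : Fintype.card (Fin p × Fin k) = p * k := by simp
  rw [hcard] at hab
  -- v = v'
  have hmodp : S v ≡ S v' [MOD p] := by
    have h4 := hab.of_dvd (dvd_mul_right p k)
    have h5 : ∀ (w : Fin p) (j0 : Fin k), S w + 2 * r * (q * j0.val) ≡ S w [MOD p] := by
      intro w j0
      have : p ∣ 2 * r * (q * j0.val) := ⟨2 * r * r * j0.val, by rw [hq]; ring⟩
      calc S w + 2 * r * (q * j0.val) ≡ S w + 0 [MOD p] :=
            Nat.ModEq.add_left _ ((Nat.modEq_zero_iff_dvd).mpr this)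
        _ = S w := by ring
    exact ((h5 v j).symm.trans h4).trans (h5 v' j')
  have hv : v = v' := hinj' v v' hmodp
  subst hv
  -- j = j'
  have h6 : 2 * r * (q * j.val) ≡ 2 * r * (q * j'.val) [MOD p * k] :=
    (Nat.ModEq.refl (S v)).add_left_cancel hab
  have hrk : Nat.Coprime r k := Nat.Coprime.coprime_dvd_right ⟨p, rfl⟩ hgcd
  have hco2 : Nat.Coprime (2 * (r * r)) k := Nat.Coprime.mul hkodd.coprime_two_left (hrk.mul hrk)
  have hdvd := h6.dvd
  have hp' : (p : ℤ) ≠ 0 := by exact_mod_cast hp.ne'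
  have hdvd2 : (k : ℤ) ∣ (2 * (r * r) : ℕ) * ((j'.val : ℤ) - (j.val : ℤ)) := by
    obtain ⟨c, hc⟩ := hdvd
    refine ⟨c, ?_⟩
    subst hq
    push_cast at hc ⊢
    apply mul_left_cancel₀ hp'
    linear_combination hc
  have hcop : IsCoprime (k : ℤ) ((2 * (r * r) : ℕ) : ℤ) :=
    (Nat.isCoprime_iff_coprime.mpr hco2).symm
  have hdvd3 : (k : ℤ) ∣ ((j'.val : ℤ) - (j.val : ℤ)) :=
    hcop.dvd_of_dvd_mul_left hdvd2
  have hzero : ((j'.val : ℤ) - (j.val : ℤ)) = 0 := by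
    apply Int.eq_zero_of_abs_lt_dvd hdvd3
    have h7 : (j.val : ℤ) < k := by exact_mod_cast j.isLt
    have h8 : (j'.val : ℤ) < k := by exact_mod_cast j'.isLt
    have h9 : (0:ℤ) ≤ j.val := Int.natCast_nonneg _
    have h10 : (0:ℤ) ≤ j'.val := Int.natCast_nonneg _
    rw [abs_sub_lt_iff]
    omega
  have : j'.val = j.val := by exact_mod_cast sub_eq_zero.mp hzero
  exact Prod.ext rfl (Fin.ext this.symm)
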